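/- Glivenko's theorem (algebraic form), underpinning the recapture of classical logic K within intuitionistic logic J: a propositional formula φ evaluates to ⊤ under every valuation of its atoms in every Boolean algebra if and only if its double negation ¬¬φ evaluates to ⊤ under every valuation of its atoms in every Heyting algebra. -/

import Mathlib

/-- Propositional formulae over a set `A` of atoms, closed under the
connectives ⊥, ∧, ∨, →. -/
inductive PropForm (A : Type) where
  | atom : A → PropForm A
  | bot : PropForm A
  | and : PropForm A → PropForm A → PropForm A
  | or : PropForm A → PropForm A → PropForm A
  | imp : PropForm A → PropForm A → PropForm A

/-- Negation `¬φ` abbreviates `φ → ⊥`. -/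
def PropForm.neg {A : Type} (φ : PropForm A) : PropForm A := .imp φ .bot

/-- The evaluation of a formula in a Heyting algebra `H` under a valuation
`v : A → H` of its atoms: ⊥ is the bottom element, ∧ is meet, ∨ is join, and
→ is Heyting implication. -/
def PropForm.eval {A H : Type} [HeytingAlgebra H] (v : A → H) : PropForm A → H
  | .atom a => v a
  | .bot => ⊥
  | .and φ ψ => φ.eval v ⊓ ψ.eval v
  | .or φ ψ => φ.eval v ⊔ ψ.eval v
  | .imp φ ψ => φ.eval v ⇨ ψ.eval v

/-- Evaluating in the regular elements computes the double negation. -/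
theorem eval_toRegular {A H : Type} [HeytingAlgebra H] (v : A → H) (φ : PropForm A) :
    ((φ.eval fun a => Heyting.Regular.toRegular (v a) : Heyting.Regular H) : H)
      = (φ.eval v)ᶜᶜ := by
  induction φ with
  | atom a => rfl
  | bot => simp [PropForm.eval]
  | and φ ψ ihφ ihψ =>
      simp only [PropForm.eval]
      exact (congrArg₂ (· ⊓ ·) ihφ ihψ).trans (compl_compl_inf_distrib _ _).symm
  | or φ ψ ihφ ihψ =>
      simp [PropForm.eval, ihφ, ihψ, compl_sup, compl_compl]
  | imp φ ψ ihφ ihψ =>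
      simp [PropForm.eval, ihφ, ihψ, ← compl_compl_himp_distrib]

/-- Glivenko's theorem (algebraic form): `φ` evaluates to ⊤ under every valuation
in every Boolean algebra iff `¬¬φ` evaluates to ⊤ under every valuation in every
Heyting algebra. -/
theorem glivenko {A : Type} (φ : PropForm A) :
    (∀ (B : Type) [BooleanAlgebra B], ∀ v : A → B, φ.eval v = ⊤) ↔
    (∀ (H : Type) [HeytingAlgebra H], ∀ v : A → H, (φ.neg.neg).eval v = ⊤) := by
  constructor
  · intro h H _ v
    have h1 := h (Heyting.Regular H) (fun a => Heyting.Regular.toRegular (v a))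
    have h2 := congrArg (Heyting.Regular.val) h1
    rw [eval_toRegular] at h2
    simpa [PropForm.neg, PropForm.eval, himp_bot] using h2
  · intro h B _ v
    have := h B v
    simp [PropForm.neg, PropForm.eval, himp_bot, compl_compl] at this
    exact this
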